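/- For all integers a ≥ 1, n ≥ 1, t ≥ 1, there exists an (a,n,t)-perfect necklace whose first t characters are all zero. -/

import Mathlib

set_option linter.unusedSectionVars false

open List
set_option linter.unusedSectionVars false

section Euler

variable {E V : Type} [Fintype E] [DecidableEq E] [DecidableEq V] (s τ : E → V)

/-- map of sources of a chain. -/
theorem euler_map_src : ∀ (L : List E), L.Chain' (fun e f => τ e = s f) → ∀ h : L ≠ [],
    L.map s = s (L.head h) :: (L.dropLast.map τ)
  | [], _, h => absurd rfl h
  | [e], _, _ => rfl
  | e :: f :: L, hc, _ => by
    have h2 : (f :: L) ≠ [] := by simp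
    have ih := euler_map_src (f :: L) (List.isChain_cons_cons.mp hc).2 h2
    have he : τ e = s f := (List.isChain_cons_cons.mp hc).1
    simp only [List.map_cons, List.head_cons] at ih ⊢
    rw [ih, List.dropLast_cons₂, List.map_cons, he]

theorem euler_count_eq (f : E → V) (L : List E) (v : V) :
    (L.map f).count v = (L.filter (fun e => decide (f e = v))).length := by
  induction L with
  | nil => simp
  | cons e L ih =>
    by_cases h : f e = v <;> simp [List.count_cons, ih, h, List.filter_cons]

theorem euler_count_le (f : E → V) (L : List E) (hnd : L.Nodup) (v : V) :
    (L.map f).count v ≤ (Finset.univ.filter fun e => f e = v).card := by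
  rw [euler_count_eq]
  rw [← List.toFinset_card_of_nodup (hnd.filter _)]
  apply Finset.card_le_card
  intro x hx
  simp only [List.mem_toFinset, List.mem_filter, decide_eq_true_eq] at hx
  simp [hx.2]

theorem euler_count_lt (f : E → V) (L : List E) (hnd : L.Nodup) (v : V)
    (g : E) (hg : g ∉ L) (hfg : f g = v) :
    (L.map f).count v < (Finset.univ.filter fun e => f e = v).card := by
  rw [euler_count_eq]
  rw [← List.toFinset_card_of_nodup (hnd.filter _)]
  apply Finset.card_lt_card
  constructor
  · intro x hx
    simp only [List.mem_toFinset, List.mem_filter, decide_eq_true_eq] at hx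
    simp [hx.2]
  · intro hsub
    have : g ∈ (L.filter (fun e => decide (f e = v))).toFinset := hsub (by simp [hfg])
    simp only [List.mem_toFinset, List.mem_filter] at this
    exact hg this.1

theorem euler_exists_unused (f : E → V) (L : List E) (v : V)
    (h : (L.map f).count v < (Finset.univ.filter fun e => f e = v).card) :
    ∃ g, g ∉ L ∧ f g = v := by
  by_contra hc
  push_neg at hc
  have hsub : (Finset.univ.filter fun e => f e = v) ⊆ (L.filter (fun e => decide (f e = v))).toFinset := by
    intro x hx
    simp only [Finset.mem_filter, Finset.mem_univ, true_and] at hx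
    by_cases hm : x ∈ L
    · simp [hm, hx]
    · exact absurd hx (hc x hm)
  have := Finset.card_le_card hsub
  rw [euler_count_eq] at h
  have hlen : (L.filter (fun e => decide (f e = v))).toFinset.card ≤
      (L.filter (fun e => decide (f e = v))).length := List.toFinset_card_le _
  omega

/-- for a closed chain, sources and targets coincide as multisets. -/
theorem euler_closed_perm (L : List E) (h : L ≠ []) (hch : L.Chain' (fun e f => τ e = s f))
    (hcl : τ (L.getLast h) = s (L.head h)) :
    (L.map s).Perm (L.map τ) := by
  have h1 := euler_map_src s τ L hch h
  have h2 : L.map τ = (L.dropLast.map τ) ++ [τ (L.getLast h)] := by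
    conv_lhs => rw [← List.dropLast_append_getLast h]
    simp
  rw [h1, h2, hcl]
  exact (List.perm_append_singleton _ _).symm

section Ext
variable (hbal : ∀ v, (Finset.univ.filter fun e => s e = v).card =
    (Finset.univ.filter fun e => τ e = v).card)

include hbal in
theorem euler_extend_open (L : List E) (h : L ≠ []) (hnd : L.Nodup)
    (hch : L.Chain' (fun e f => τ e = s f))
    (hop : τ (L.getLast h) ≠ s (L.head h)) :
    ∃ L' : List E, L'.Nodup ∧ L'.Chain' (fun e f => τ e = s f) ∧
      L'.length = L.length + 1 := by
  set v := τ (L.getLast h) with hv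
  have h1 := euler_map_src s τ L hch h
  have h2 : L.map τ = (L.dropLast.map τ) ++ [v] := by
    conv_lhs => rw [← List.dropLast_append_getLast h]
    simp
    exact hv.symm
  have hcs : (L.map s).count v = (L.dropLast.map τ).count v := by
    rw [h1, List.count_cons]
    simp [Ne.symm hop]
  have hct : (L.map τ).count v = (L.dropLast.map τ).count v + 1 := by
    rw [h2]
    simp
  have hle := euler_count_le τ L hnd v
  have hlt : (L.map s).count v < (Finset.univ.filter fun e => s e = v).card := by
    rw [hbal v]; omega
  obtain ⟨g, hg, hgs⟩ := euler_exists_unused s L v hlt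
  refine ⟨L ++ [g], ?_, ?_, by simp⟩
  · simp [List.nodup_append, hnd, hg]
    exact fun x hx hxg => hg (hxg ▸ hx)
  · unfold List.Chain' at hch ⊢
    rw [List.isChain_append]
    refine ⟨hch, List.isChain_singleton _, ?_⟩
    intro x hx y hy
    rw [List.getLast?_eq_getLast h, Option.mem_some_iff] at hx
    simp only [List.head?_cons, Option.mem_some_iff] at hy
    subst hx; subst hy
    exact hgs.symm

theorem euler_splice (L : List E) (hnd : L.Nodup)
    (hch : L.Chain' (fun e f => τ e = s f))
    (hcl : ∀ h : L ≠ [], τ (L.getLast h) = s (L.head h))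
    (e : E) (he : e ∈ L) (g : E) (hg : g ∉ L) (hge : τ e = s g) :
    ∃ L' : List E, L'.Nodup ∧ L'.Chain' (fun e f => τ e = s f) ∧
      L'.length = L.length + 1 := by
  obtain ⟨A, B, rfl⟩ := List.append_of_mem he
  have hne : A ++ e :: B ≠ [] := by simp
  refine ⟨B ++ (A ++ [e, g]), ?_, ?_, by simp; omega⟩
  · have hperm : (B ++ (A ++ [e, g])).Perm (g :: (A ++ e :: B)) := by
      calc B ++ (A ++ [e, g])
          ~ (A ++ [e, g]) ++ B := List.perm_append_comm
        _ = A ++ e :: (g :: B) := by simp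
        _ ~ e :: (A ++ g :: B) := List.perm_middle
        _ ~ e :: (g :: (A ++ B)) := (List.perm_middle (a := g)).cons e
        _ ~ g :: (e :: (A ++ B)) := List.Perm.swap _ _ _
        _ ~ g :: (A ++ e :: B) := List.perm_middle.symm.cons g
    exact hperm.nodup_iff.mpr (List.nodup_cons.mpr ⟨hg, hnd⟩)
  · unfold List.Chain' at hch ⊢
    rw [List.isChain_append, List.isChain_append]
    rw [List.isChain_append] at hch
    refine ⟨(List.isChain_cons.mp hch.2.1).2, ⟨hch.1, ?_, ?_⟩, ?_⟩
    · -- Chain' [e, g]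
      exact List.isChain_cons_cons.mpr ⟨hge, List.isChain_singleton _⟩
    · -- seam A → [e, g]
      intro x hx y hy
      simp only [List.head?_cons, Option.mem_some_iff] at hy
      subst hy
      exact hch.2.2 x hx e (by simp)
    · -- seam B → (A ++ [e, g])
      intro x hx y hy
      have hB : B ≠ [] := by rintro rfl; simp at hx
      rw [List.getLast?_eq_getLast hB, Option.mem_some_iff] at hx
      subst hx
      have h1 : (A ++ e :: B).getLast hne = B.getLast hB := by
        rw [List.getLast_append_of_ne_nil]
        exact List.getLast_cons hB
      have h2 := hcl hne
      rw [h1] at h2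
      cases A with
      | nil =>
        simp only [List.nil_append, Option.mem_some_iff] at hy ⊢
        simp only [List.nil_append, List.head_cons] at h2
        simp only [List.head?_cons, Option.mem_some_iff] at hy
        subst hy; exact h2
      | cons a A' =>
        simp only [List.cons_append, List.head?_cons, Option.mem_some_iff] at hy
        subst hy
        simpa using h2

include hbal in
theorem euler_extend_closed (L : List E) (h : L ≠ []) (hnd : L.Nodup)
    (hch : L.Chain' (fun e f => τ e = s f))
    (hcl : τ (L.getLast h) = s (L.head h))
    (g₀ : E) (hg₀ : g₀ ∉ L)
    (hconn : ∀ e e' : E,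
      Relation.ReflTransGen (fun u v => ∃ g, s g = u ∧ τ g = v) (τ e) (s e')) :
    ∃ L' : List E, L'.Nodup ∧ L'.Chain' (fun e f => τ e = s f) ∧
      L'.length = L.length + 1 := by
  have hperm := euler_closed_perm s τ L h hch hcl
  -- walk lemma
  have walk : ∀ x y, Relation.ReflTransGen (fun u v => ∃ g, s g = u ∧ τ g = v) x y →
      (∃ e ∈ L, s e = y) →
      (∃ e ∈ L, s e = x) ∨ ∃ h', h' ∉ L ∧ (∃ e ∈ L, s e = τ h') := by
    intro x y hxy hy
    induction hxy using Relation.ReflTransGen.head_induction_on with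
    | refl => exact Or.inl hy
    | head step _ ih =>
      obtain ⟨g, hgs, hgt⟩ := step
      rcases ih with h1 | h1
      · by_cases hgL : g ∈ L
        · exact Or.inl ⟨g, hgL, hgs⟩
        · exact Or.inr ⟨g, hgL, hgt ▸ h1⟩
      · exact Or.inr h1
  have hstart : ∃ e ∈ L, s e = s (L.head h) := ⟨L.head h, List.head_mem h, rfl⟩
  have hkey : ∃ h', h' ∉ L ∧ (∃ e ∈ L, s e = τ h') := by
    rcases walk (τ g₀) (s (L.head h)) (hconn g₀ (L.head h)) hstart with h1 | h1
    · exact ⟨g₀, hg₀, h1⟩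
    · exact h1
  obtain ⟨h', hh', v0, hv0L, hv0⟩ := hkey
  set v := τ h' with hv
  -- v is a source of L, hence (by the perm) also a target of some edge of L
  have hvs : v ∈ L.map s := List.mem_map.mpr ⟨v0, hv0L, hv0⟩
  have hvt : v ∈ L.map τ := hperm.mem_iff.mp hvs
  obtain ⟨e, heL, he⟩ := List.mem_map.mp hvt
  -- counting: there is an unused edge out of v
  have hlt1 : (L.map τ).count v < (Finset.univ.filter fun e => τ e = v).card :=
    euler_count_lt τ L hnd v h' hh' rfl
  have heq : (L.map s).count v = (L.map τ).count v := hperm.count_eq v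
  have hlt : (L.map s).count v < (Finset.univ.filter fun e => s e = v).card := by
    rw [hbal v]; omega
  obtain ⟨g, hgL, hgs⟩ := euler_exists_unused s L v hlt
  exact euler_splice s τ L hnd hch (fun _ => hcl) e heL g hgL (he.trans hgs.symm)

include hbal in
theorem euler_grow (L : List E) [Nonempty E] (hnd : L.Nodup)
    (hch : L.Chain' (fun e f => τ e = s f))
    (hconn : ∀ e e' : E,
      Relation.ReflTransGen (fun u v => ∃ g, s g = u ∧ τ g = v) (τ e) (s e'))
    (hbad : ¬ (∃ h : L ≠ [], τ (L.getLast h) = s (L.head h) ∧ ∀ e, e ∈ L)) :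
    ∃ L' : List E, L'.Nodup ∧ L'.Chain' (fun e f => τ e = s f) ∧
      L'.length = L.length + 1 := by
  by_cases h : L = []
  · subst h
    obtain ⟨e⟩ := ‹Nonempty E›
    exact ⟨[e], List.nodup_singleton e, List.isChain_singleton e, rfl⟩
  · by_cases hcl : τ (L.getLast h) = s (L.head h)
    · have hinc : ¬ ∀ e, e ∈ L := fun hall => hbad ⟨h, hcl, hall⟩
      push_neg at hinc
      obtain ⟨g₀, hg₀⟩ := hinc
      exact euler_extend_closed s τ hbal L h hnd hch hcl g₀ hg₀ hconn
    · exact euler_extend_open s τ hbal L h hnd hch hcl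

include hbal in
theorem exists_euler_circuit [Nonempty E]
    (hconn : ∀ e e' : E,
      Relation.ReflTransGen (fun u v => ∃ g, s g = u ∧ τ g = v) (τ e) (s e')) :
    ∃ L : List E, L.Nodup ∧ L.Chain' (fun e f => τ e = s f) ∧
      ∃ h : L ≠ [], τ (L.getLast h) = s (L.head h) ∧ ∀ e, e ∈ L := by
  have key : ∀ k : ℕ, (∃ L : List E, L.Nodup ∧ L.Chain' (fun e f => τ e = s f) ∧
      L.length = k) ∨ (∃ L : List E, L.Nodup ∧ L.Chain' (fun e f => τ e = s f) ∧
      ∃ h : L ≠ [], τ (L.getLast h) = s (L.head h) ∧ ∀ e, e ∈ L) := by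
    intro k
    induction k with
    | zero => exact Or.inl ⟨[], List.nodup_nil, List.isChain_nil, rfl⟩
    | succ k ih =>
      rcases ih with ⟨L, hnd, hch, rfl⟩ | done
      · by_cases hbad : ∃ h : L ≠ [], τ (L.getLast h) = s (L.head h) ∧ ∀ e, e ∈ L
        · exact Or.inr ⟨L, hnd, hch, hbad⟩
        · obtain ⟨L', h1, h2, h3⟩ := euler_grow s τ hbal L hnd hch hconn hbad
          exact Or.inl ⟨L', h1, h2, h3⟩
      · exact Or.inr done
  rcases key (Fintype.card E + 1) with ⟨L, hnd, _, hlen⟩ | done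
  · have := hnd.length_le_card
    omega
  · exact done

end Ext

end Euler
set_option linter.unusedSectionVars false

section Necklace
open List
open Fin.NatCast
variable (a n t : ℕ) [NeZero a] [NeZero t]

def PNS (p : Fin t × (Fin n → Fin a)) : Fin t × (Fin (n-1) → Fin a) :=
  (p.1, fun k => p.2 ⟨k.val, by have := k.isLt; omega⟩)

def PNT (p : Fin t × (Fin n → Fin a)) : Fin t × (Fin (n-1) → Fin a) :=
  (p.1 + 1, fun k => p.2 ⟨k.val + 1, by have := k.isLt; omega⟩)

abbrev PNE := Unit ⊕ {p : Fin t × (Fin n → Fin a) // p.2 ≠ fun _ => 0}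

def PNsrc : PNE a n t → Fin t × (Fin (n-1) → Fin a)
  | .inl _ => (0, fun _ => 0)
  | .inr p => PNS a n t p.val

def PNtgt : PNE a n t → Fin t × (Fin (n-1) → Fin a)
  | .inl _ => (0, fun _ => 0)
  | .inr p => PNT a n t p.val

def PNcyc (w : Fin n → Fin a) : Fin n → Fin a :=
  fun m => w ⟨(m.val + 1) % n, Nat.mod_lt _ m.pos⟩

def PNcyc' (w : Fin n → Fin a) : Fin n → Fin a :=
  fun m => w ⟨(m.val + (n-1)) % n, Nat.mod_lt _ m.pos⟩

theorem PNcyc'_cyc (w : Fin n → Fin a) : PNcyc' a n (PNcyc a n w) = w := by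
  funext m
  have h : ((m.val + (n-1)) % n + 1) % n = m.val := by
    rw [Nat.mod_add_mod]
    have h2 : m.val + (n-1) + 1 = m.val + n := by have := m.isLt; omega
    rw [h2, Nat.add_mod_right, Nat.mod_eq_of_lt m.isLt]
  exact congrArg w (Fin.ext h)

theorem PNcyc_cyc' (w : Fin n → Fin a) : PNcyc a n (PNcyc' a n w) = w := by
  funext m
  have h : ((m.val + 1) % n + (n-1)) % n = m.val := by
    rw [Nat.mod_add_mod]
    have h2 : m.val + 1 + (n-1) = m.val + n := by have := m.isLt; omega
    rw [h2, Nat.add_mod_right, Nat.mod_eq_of_lt m.isLt]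
  exact congrArg w (Fin.ext h)

theorem PNcyc_ne {a n : ℕ} [NeZero a] (w : Fin n → Fin a) (h : w ≠ fun _ => 0) :
    PNcyc a n w ≠ fun _ => 0 := by
  intro hc
  apply h
  have := congrArg (PNcyc' a n) hc
  rw [PNcyc'_cyc] at this
  rw [this]
  funext m
  rfl

theorem PNcyc'_ne {a n : ℕ} [NeZero a] (w : Fin n → Fin a) (h : w ≠ fun _ => 0) :
    PNcyc' a n w ≠ fun _ => 0 := by
  intro hc
  apply h
  have := congrArg (PNcyc a n) hc
  rw [PNcyc_cyc'] at this
  rw [this]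
  funext m
  rfl

def PNrot : PNE a n t → PNE a n t
  | .inl _ => .inl ()
  | .inr p => .inr ⟨(p.val.1 + 1, PNcyc a n p.val.2), PNcyc_ne _ p.property⟩

def PNrot' : PNE a n t → PNE a n t
  | .inl _ => .inl ()
  | .inr p => .inr ⟨(p.val.1 - 1, PNcyc' a n p.val.2), PNcyc'_ne _ p.property⟩

theorem PNsrc_rot (e : PNE a n t) : PNsrc a n t (PNrot a n t e) = PNtgt a n t e := by
  cases e with
  | inl _ => simp [PNrot, PNrot', PNsrc, PNtgt]
  | inr p =>
    refine Prod.ext rfl ?_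
    funext k
    have h : (k.val + 1) % n = k.val + 1 := Nat.mod_eq_of_lt (by have := k.isLt; omega)
    exact congrArg p.val.2 (Fin.ext h)

theorem PNtgt_rot' (e : PNE a n t) : PNtgt a n t (PNrot' a n t e) = PNsrc a n t e := by
  cases e with
  | inl _ => simp [PNrot, PNrot', PNsrc, PNtgt]
  | inr p =>
    refine Prod.ext (by show p.val.1 - 1 + 1 = p.val.1; exact sub_add_cancel _ _) ?_
    funext k
    have h : (k.val + 1 + (n-1)) % n = k.val := by
      have h2 : k.val + 1 + (n-1) = k.val + n := by have := k.isLt; omega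
      rw [h2, Nat.add_mod_right]
      exact Nat.mod_eq_of_lt (by have := k.isLt; omega)
    exact congrArg p.val.2 (Fin.ext h)

theorem PNrot'_rot (e : PNE a n t) : PNrot' a n t (PNrot a n t e) = e := by
  cases e with
  | inl _ => simp [PNrot, PNrot', PNsrc, PNtgt]
  | inr p =>
    exact congrArg Sum.inr (Subtype.ext
      (Prod.ext (add_sub_cancel_right _ _) (PNcyc'_cyc a n p.val.2)))

theorem PNrot_rot' (e : PNE a n t) : PNrot a n t (PNrot' a n t e) = e := by
  cases e with
  | inl _ => simp [PNrot, PNrot', PNsrc, PNtgt]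
  | inr p =>
    exact congrArg Sum.inr (Subtype.ext
      (Prod.ext (sub_add_cancel _ _) (PNcyc_cyc' a n p.val.2)))

theorem PNbal (v : Fin t × (Fin (n-1) → Fin a)) :
    (Finset.univ.filter fun e => PNsrc a n t e = v).card =
    (Finset.univ.filter fun e => PNtgt a n t e = v).card := by
  apply Finset.card_bij' (fun e _ => PNrot' a n t e) (fun e _ => PNrot a n t e)
  · intro e he
    simp only [Finset.mem_filter, Finset.mem_univ, true_and] at he ⊢
    rw [PNtgt_rot']; exact he
  · intro e he
    simp only [Finset.mem_filter, Finset.mem_univ, true_and] at he ⊢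
    rw [PNsrc_rot]; exact he
  · intro e _; exact PNrot_rot' a n t e
  · intro e _; exact PNrot'_rot a n t e

def PNjoin (u : Fin (n-1) → Fin a) (c : Fin a) : Fin n → Fin a :=
  fun m => if h : m.val < n - 1 then u ⟨m.val, h⟩ else c

def PNpush (u : Fin (n-1) → Fin a) (c : Fin a) : Fin (n-1) → Fin a :=
  fun k => if h : k.val + 1 < n - 1 then u ⟨k.val + 1, h⟩ else c

theorem PNjoin_ne_of_c (u : Fin (n-1) → Fin a) (c : Fin a) (hn : 0 < n) (hc : c ≠ 0) :
    PNjoin a n u c ≠ fun _ => 0 := by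
  intro h
  apply hc
  have := congrFun h ⟨n-1, by omega⟩
  simpa [PNjoin] using this

theorem PNjoin_ne_of_u (u : Fin (n-1) → Fin a) (c : Fin a) (k0 : Fin (n-1))
    (hu : u k0 ≠ 0) : PNjoin a n u c ≠ fun _ => 0 := by
  intro h
  apply hu
  have h2 := congrFun h ⟨k0.val, by have := k0.isLt; omega⟩
  simpa [PNjoin, k0.isLt, Fin.eta] using h2

def PNStep : (Fin t × (Fin (n-1) → Fin a)) → (Fin t × (Fin (n-1) → Fin a)) → Prop :=
  fun x y => ∃ g : PNE a n t, PNsrc a n t g = x ∧ PNtgt a n t g = y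

theorem PNstep (j : Fin t) (u : Fin (n-1) → Fin a) (c : Fin a)
    (hne : PNjoin a n u c ≠ fun _ => 0) :
    PNStep a n t (j, u) (j + 1, PNpush a n u c) := by
  refine ⟨.inr ⟨(j, PNjoin a n u c), hne⟩, ?_, ?_⟩
  · refine Prod.ext rfl (funext fun k => ?_)
    show PNjoin a n u c ⟨k.val, _⟩ = u k
    simp only [PNjoin]
    rw [dif_pos k.isLt]
  · refine Prod.ext rfl (funext fun k => ?_)
    show PNjoin a n u c ⟨k.val + 1, _⟩ = PNpush a n u c k
    simp only [PNjoin, PNpush]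

def PNpushN (m : ℕ) (u : Fin (n-1) → Fin a) (c : Fin a) : Fin (n-1) → Fin a :=
  fun k => if h : k.val + m < n-1 then u ⟨k.val + m, h⟩ else c

theorem PNone_ne (ha2 : 1 < a) : (⟨1, ha2⟩ : Fin a) ≠ 0 := by
  intro h
  have := congrArg Fin.val h
  simp at this

theorem PNpush_pushN (ha2 : 1 < a) (m : ℕ) (u : Fin (n-1) → Fin a) :
    PNpush a n (PNpushN a n m u ⟨1, ha2⟩) ⟨1, ha2⟩ = PNpushN a n (m+1) u ⟨1, ha2⟩ := by
  funext k
  simp only [PNpush, PNpushN]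
  by_cases h1 : k.val + 1 < n - 1
  · rw [dif_pos h1]
    by_cases h2 : k.val + 1 + m < n - 1
    · rw [dif_pos h2, dif_pos (show k.val + (m+1) < n-1 by omega)]
      exact congrArg u (Fin.ext (by simp; omega))
    · rw [dif_neg h2, dif_neg (show ¬ k.val + (m+1) < n-1 by omega)]
  · rw [dif_neg h1, dif_neg (show ¬ k.val + (m+1) < n-1 by omega)]

theorem PNreach_pushN (ha2 : 1 < a) (hn : 0 < n) (m : ℕ) (j : Fin t)
    (u : Fin (n-1) → Fin a) :
    Relation.ReflTransGen (PNStep a n t) (j, u)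
      (j + (m : Fin t), PNpushN a n m u ⟨1, ha2⟩) := by
  induction m with
  | zero =>
    have h1 : PNpushN a n 0 u ⟨1, ha2⟩ = u := by
      funext k
      simp only [PNpushN]
      rw [dif_pos (by have := k.isLt; omega)]
      exact congrArg u (Fin.ext (by simp))
    rw [h1, Nat.cast_zero, add_zero]
  | succ m ih =>
    refine ih.tail ?_
    have hs := PNstep a n t (j + (m : Fin t)) (PNpushN a n m u ⟨1, ha2⟩) ⟨1, ha2⟩
      (PNjoin_ne_of_c a n _ _ hn (PNone_ne a ha2))
    rw [PNpush_pushN a n ha2 m u] at hs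
    have hj : j + (m : Fin t) + 1 = j + ((m+1 : ℕ) : Fin t) := by
      rw [Nat.cast_add_one, add_assoc]
    rw [hj] at hs
    exact hs

theorem PNreach_stay (ha2 : 1 < a) (hn : 0 < n) (m : ℕ) (j : Fin t) :
    Relation.ReflTransGen (PNStep a n t) (j, fun _ => (⟨1, ha2⟩ : Fin a))
      (j + (m : Fin t), fun _ => (⟨1, ha2⟩ : Fin a)) := by
  induction m with
  | zero => rw [Nat.cast_zero, add_zero]
  | succ m ih =>
    refine ih.tail ?_
    have hs := PNstep a n t (j + (m : Fin t)) (fun _ => (⟨1, ha2⟩ : Fin a)) ⟨1, ha2⟩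
      (PNjoin_ne_of_c a n _ _ hn (PNone_ne a ha2))
    have hp : PNpush a n (fun _ => (⟨1, ha2⟩ : Fin a)) ⟨1, ha2⟩ =
        (fun _ => (⟨1, ha2⟩ : Fin a)) := by
      funext k
      simp only [PNpush]
      split <;> rfl
    rw [hp] at hs
    have hj : j + (m : Fin t) + 1 = j + ((m+1 : ℕ) : Fin t) := by
      rw [Nat.cast_add_one, add_assoc]
    rw [hj] at hs
    exact hs

def PNq (m : ℕ) (u' : Fin (n-1) → Fin a) (c : Fin a) : Fin (n-1) → Fin a :=
  fun k => if k.val < n-1-m then c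
    else u' ⟨k.val - (n-1-m), by have := k.isLt; omega⟩

theorem PNpush_q (ha2 : 1 < a) (m : ℕ) (hm : m + 1 ≤ n - 1) (u' : Fin (n-1) → Fin a) :
    PNpush a n (PNq a n m u' ⟨1, ha2⟩) (u' ⟨m, by omega⟩) =
      PNq a n (m+1) u' ⟨1, ha2⟩ := by
  funext k
  simp only [PNpush, PNq]
  by_cases h1 : k.val + 1 < n - 1
  · rw [dif_pos h1]
    by_cases h2 : k.val + 1 < n-1-m
    · rw [if_pos h2, if_pos (show k.val < n-1-(m+1) by omega)]
    · rw [if_neg h2, if_neg (show ¬ k.val < n-1-(m+1) by omega)]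
      exact congrArg u' (Fin.ext (by simp; omega))
  · rw [dif_neg h1, if_neg (show ¬ k.val < n-1-(m+1) by omega)]
    exact congrArg u' (Fin.ext (by simp; omega))

theorem PNreach_write (ha2 : 1 < a) (hn : 0 < n) (u' : Fin (n-1) → Fin a) :
    ∀ m, m ≤ n-1 → ∀ j : Fin t,
    Relation.ReflTransGen (PNStep a n t) (j, fun _ => (⟨1, ha2⟩ : Fin a))
      (j + (m : Fin t), PNq a n m u' ⟨1, ha2⟩) := by
  intro m
  induction m with
  | zero =>
    intro _ j
    have h1 : PNq a n 0 u' ⟨1, ha2⟩ = fun _ => (⟨1, ha2⟩ : Fin a) := by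
      funext k
      simp only [PNq]
      rw [if_pos (by have := k.isLt; omega)]
    rw [h1, Nat.cast_zero, add_zero]
  | succ m ih =>
    intro hm j
    refine (ih (by omega) j).tail ?_
    have hone : PNq a n m u' ⟨1, ha2⟩ ⟨0, by omega⟩ ≠ 0 := by
      simp only [PNq]
      rw [if_pos (by omega)]
      exact PNone_ne a ha2
    have hs := PNstep a n t (j + (m : Fin t)) (PNq a n m u' ⟨1, ha2⟩)
      (u' ⟨m, by omega⟩) (PNjoin_ne_of_u a n _ _ _ hone)
    rw [PNpush_q a n ha2 m hm u'] at hs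
    have hj : j + (m : Fin t) + 1 = j + ((m+1 : ℕ) : Fin t) := by
      rw [Nat.cast_add_one, add_assoc]
    rw [hj] at hs
    exact hs

theorem PNconn (ha2 : 1 < a) (hn : 0 < n)
    (x y : Fin t × (Fin (n-1) → Fin a)) :
    Relation.ReflTransGen (PNStep a n t) x y := by
  obtain ⟨j, u⟩ := x
  obtain ⟨j', u'⟩ := y
  have r1 := PNreach_pushN a n t ha2 hn (n-1) j u
  have hones : PNpushN a n (n-1) u ⟨1, ha2⟩ = fun _ => (⟨1, ha2⟩ : Fin a) := by
    funext k
    simp only [PNpushN]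
    rw [dif_neg (by omega)]
  rw [hones] at r1
  set c : Fin t := ((n-1 : ℕ) : Fin t) with hc
  set d : Fin t := j' - (j + c + c) with hd
  have r2 := PNreach_stay a n t ha2 hn d.val (j + c)
  rw [Fin.cast_val_eq_self d] at r2
  have r3 := PNreach_write a n t ha2 hn u' (n-1) le_rfl (j + c + d)
  have hq : PNq a n (n-1) u' ⟨1, ha2⟩ = u' := by
    funext k
    simp only [PNq]
    rw [if_neg (by omega)]
    exact congrArg u' (Fin.ext (by simp))
  rw [hq] at r3
  have hfinal : j + c + d + c = j' := by
    rw [add_right_comm (j + c) d c, add_comm (j + c + c) d, hd, sub_add_cancel]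
  rw [hfinal] at r3
  exact (r1.trans r2).trans r3

def PNrho : PNE a n t → Fin t × (Fin n → Fin a)
  | .inl _ => (0, fun _ => 0)
  | .inr p => p.val

theorem PNsrc_rho (e : PNE a n t) (h : e ≠ .inl ()) :
    PNsrc a n t e = PNS a n t (PNrho a n t e) := by
  cases e with
  | inl u => exact absurd rfl h
  | inr p => rfl

theorem PNtgt_rho (e : PNE a n t) (h : e ≠ .inl ()) :
    PNtgt a n t e = PNT a n t (PNrho a n t e) := by
  cases e with
  | inl u => exact absurd rfl h
  | inr p => rfl

theorem PNrho_inj (e e' : PNE a n t) (h : e ≠ .inl ()) (h' : e' ≠ .inl ())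
    (heq : PNrho a n t e = PNrho a n t e') : e = e' := by
  cases e with
  | inl u => exact absurd rfl h
  | inr p =>
    cases e' with
    | inl u => exact absurd rfl h'
    | inr p' => exact congrArg Sum.inr (Subtype.ext heq)

theorem PNrho_snd_ne (e : PNE a n t) (h : e ≠ .inl ()) :
    (PNrho a n t e).2 ≠ fun _ => 0 := by
  cases e with
  | inl u => exact absurd rfl h
  | inr p => exact p.property

theorem PNcard : Fintype.card (PNE a n t) = t * a ^ n - t + 1 := by
  have c1 : Fintype.card (Fin t × (Fin n → Fin a)) = t * a ^ n := by
    simp [Fintype.card_fun]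
  have c2 : Fintype.card {p : Fin t × (Fin n → Fin a) // p.2 = fun _ => 0} = t := by
    have e : {p : Fin t × (Fin n → Fin a) // p.2 = fun _ => 0} ≃ Fin t :=
      { toFun := fun q => q.val.1
        invFun := fun j => ⟨(j, fun _ => 0), rfl⟩
        left_inv := fun q => Subtype.ext (Prod.ext rfl q.property.symm)
        right_inv := fun j => rfl }
    rw [Fintype.card_congr e, Fintype.card_fin]
  have c3 : Fintype.card {p : Fin t × (Fin n → Fin a) // p.2 ≠ fun _ => 0} =
      t * a ^ n - t := by
    rw [Fintype.card_subtype_compl, c1, c2]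
  have c4 : Fintype.card (PNE a n t) =
      1 + Fintype.card {p : Fin t × (Fin n → Fin a) // p.2 ≠ fun _ => 0} := by
    simp
  rw [c4, c3]
  omega

end Necklace

/-- `v`, viewed as a cyclic word of length `t * a ^ n` (a periodic function `ℕ → Fin a`),
is an `(a, n, t)`-perfect necklace. -/
def IsPerfectNecklace (a n t : ℕ) (v : ℕ → Fin a) : Prop :=
  (∀ i, v (i + t * a ^ n) = v i) ∧
  ∀ j : Fin t, ∀ w : Fin n → Fin a,
    ∃! i : Fin (t * a ^ n), (i : ℕ) % t = (j : ℕ) ∧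
      ∀ m : Fin n, v ((i : ℕ) + (m : ℕ)) = w m

theorem PN_main (a n t : ℕ) (ha2 : 1 < a) (hn : 0 < n) (ht : 0 < t) :
    ∃ v : ℕ → Fin a, IsPerfectNecklace a n t v ∧ ∀ i < t, v i = ⟨0, by omega⟩ := by
  haveI : NeZero a := ⟨by omega⟩
  haveI : NeZero t := ⟨by omega⟩
  classical
  obtain ⟨L, hnd, hch, hne, hcl, hall⟩ :=
    exists_euler_circuit (PNsrc a n t) (PNtgt a n t) (PNbal a n t)
      (fun e e' => PNconn a n t ha2 hn _ _)
  set N := t * a ^ n with hN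
  have hpow : 2 ≤ a ^ n := le_trans ha2 (Nat.le_self_pow hn.ne' a)
  have htN : t < N := by
    have h1 : t * 1 < t * a ^ n := Nat.mul_lt_mul_of_le_of_lt (le_refl t) (by omega) ht
    omega
  have hNpos : 0 < N := by omega
  have hcard : L.length = Fintype.card (PNE a n t) := by
    have h1 : L.toFinset = Finset.univ :=
      Finset.eq_univ_iff_forall.mpr fun e => List.mem_toFinset.mpr (hall e)
    have h2 := List.toFinset_card_of_nodup hnd
    rw [← h2, h1, Finset.card_univ]
  have hlen : L.length = N - t + 1 := by rw [hcard, PNcard]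
  have hpos : 0 < L.length := by omega
  have hlen2 : 2 ≤ L.length := by omega
  -- cyclic get property of the circuit
  have CGL : ∀ i : ℕ, PNtgt a n t (L.get ⟨i % L.length, Nat.mod_lt _ hpos⟩) =
      PNsrc a n t (L.get ⟨(i+1) % L.length, Nat.mod_lt _ hpos⟩) := by
    intro i
    have hmod : i % L.length < L.length := Nat.mod_lt _ hpos
    have hs : (i+1) % L.length = (i % L.length + 1) % L.length := by
      rw [Nat.add_mod i 1, Nat.mod_eq_of_lt (show 1 < L.length by omega)]
    by_cases h : i % L.length + 1 = L.length
    · have e1 : (⟨i % L.length, Nat.mod_lt _ hpos⟩ : Fin L.length) =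
          ⟨L.length - 1, by omega⟩ := Fin.ext (show i % L.length = L.length - 1 by omega)
      have e2 : (⟨(i+1) % L.length, Nat.mod_lt _ hpos⟩ : Fin L.length) =
          ⟨0, hpos⟩ := Fin.ext (by
        show (i+1) % L.length = 0
        rw [hs, h, Nat.mod_self])
      have g1 : L.get ⟨i % L.length, Nat.mod_lt _ hpos⟩ = L.getLast hne :=
        (congrArg L.get e1).trans (List.getLast_eq_getElem hne).symm
      have g2 : L.get ⟨(i+1) % L.length, Nat.mod_lt _ hpos⟩ = L.head hne :=
        (congrArg L.get e2).trans (List.head_eq_getElem_zero hne).symm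
      exact (congrArg (PNtgt a n t) g1).trans
        (hcl.trans (congrArg (PNsrc a n t) g2).symm)
    · have hlt : i % L.length + 1 < L.length := by omega
      have e2 : (⟨(i+1) % L.length, Nat.mod_lt _ hpos⟩ : Fin L.length) =
          ⟨i % L.length + 1, hlt⟩ := Fin.ext (by
        show (i+1) % L.length = i % L.length + 1
        rw [hs, Nat.mod_eq_of_lt hlt])
      rw [e2]
      exact List.isChain_iff_getElem.mp hch (i % L.length) (by omega)
  -- position of the special loop edge
  obtain ⟨k, hk, hgetk⟩ := List.mem_iff_getElem.mp (hall (.inl ()))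
  set F : ℕ → PNE a n t := fun q => L.get ⟨(q + k) % L.length, Nat.mod_lt _ hpos⟩ with hF
  have hF0 : F 0 = .inl () := by
    rw [hF]
    have h5 : (⟨(0 + k) % L.length, Nat.mod_lt _ hpos⟩ : Fin L.length) = ⟨k, hk⟩ :=
      Fin.ext (by simp [Nat.mod_eq_of_lt hk])
    show L.get ⟨(0 + k) % L.length, Nat.mod_lt _ hpos⟩ = _
    rw [h5]
    exact hgetk
  have CGF : ∀ q : ℕ, PNtgt a n t (F q) = PNsrc a n t (F (q+1)) := by
    intro q
    have h6 := CGL (q + k)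
    have h7 : (⟨(q + k + 1) % L.length, Nat.mod_lt _ hpos⟩ : Fin L.length) =
        ⟨(q + 1 + k) % L.length, Nat.mod_lt _ hpos⟩ :=
      Fin.ext (show (q+k+1) % L.length = (q+1+k) % L.length by
        rw [show q + k + 1 = q + 1 + k from by omega])
    exact h6.trans (congrArg (PNsrc a n t) (congrArg L.get h7))
  have hFlen : F L.length = .inl () := by
    rw [hF]
    have h8 : (⟨(L.length + k) % L.length, Nat.mod_lt _ hpos⟩ : Fin L.length) =
        ⟨(0 + k) % L.length, Nat.mod_lt _ hpos⟩ :=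
      Fin.ext (show (L.length + k) % L.length = (0 + k) % L.length by
        rw [Nat.add_mod_left, Nat.zero_add])
    show L.get _ = _
    exact (congrArg L.get h8).trans hF0
  have Finj : ∀ q q', q < L.length → q' < L.length → F q = F q' → q = q' := by
    intro q q' hq hq' heq
    rw [hF] at heq
    have h7 := List.nodup_iff_injective_get.mp hnd heq
    have h8 : (q + k) % L.length = (q' + k) % L.length := congrArg Fin.val h7
    have h9 : q % L.length = q' % L.length := Nat.ModEq.add_right_cancel' k h8
    rw [Nat.mod_eq_of_lt hq, Nat.mod_eq_of_lt hq'] at h9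
    exact h9
  have FneInl : ∀ q, 0 < q → q < L.length → F q ≠ .inl () := by
    intro q h0 hq heq
    have := Finj q 0 hq (by omega) (heq.trans hF0.symm)
    omega
  have Fsurj : ∀ e, ∃ q, q < L.length ∧ F q = e := by
    intro e
    have hbij : Function.Bijective (fun q : Fin L.length => F q.val) := by
      rw [Fintype.bijective_iff_injective_and_card]
      constructor
      · intro q q' hqq
        exact Fin.ext (Finj _ _ q.isLt q'.isLt hqq)
      · rw [Fintype.card_fin, hcard]
    obtain ⟨q, hq⟩ := hbij.surjective e
    exact ⟨q.val, q.isLt, hq⟩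
  -- the edge sequence of the necklace
  set G : ℕ → Fin t × (Fin n → Fin a) := fun i =>
    if h : i % N < t then ((⟨i % N, h⟩ : Fin t), fun _ => 0)
    else PNrho a n t (F (i % N - t + 1)) with hG
  have G1 : ∀ i, G (i + N) = G i := by
    intro i
    simp only [hG]
    simp only [Nat.add_mod_right]
  have G2 : ∀ i, PNT a n t (G i) = PNS a n t (G (i+1)) := by
    intro i
    have hrlt : i % N < N := Nat.mod_lt _ hNpos
    have hs : (i+1) % N = (i % N + 1) % N := by
      rw [Nat.add_mod i 1, Nat.mod_eq_of_lt (show 1 < N by omega)]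
    by_cases hA : i % N + 1 < t
    · have h1 : G i = (⟨i % N, by omega⟩, fun _ => 0) := by
        simp only [hG]; exact dif_pos (by omega)
      have h2 : G (i+1) = (⟨i % N + 1, hA⟩, fun _ => 0) := by
        simp only [hG]
        have hm : (i+1) % N = i % N + 1 := by rw [hs, Nat.mod_eq_of_lt (by omega)]
        simp only [hm]
        exact dif_pos hA
      rw [h1, h2]
      refine Prod.ext (Fin.ext ?_) rfl
      show ((i % N) + (1 : Fin t).val) % t = i % N + 1
      rw [Fin.val_one', Nat.mod_eq_of_lt (show 1 < t by omega)]
      exact Nat.mod_eq_of_lt (by omega)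
    · by_cases hB : i % N + 1 = t
      · have h1 : G i = (⟨i % N, by omega⟩, fun _ => 0) := by
          simp only [hG]; exact dif_pos (by omega)
        have h2 : G (i+1) = PNrho a n t (F 1) := by
          simp only [hG]
          have hm : (i+1) % N = t := by rw [hs, hB, Nat.mod_eq_of_lt htN]
          simp only [hm]
          rw [dif_neg (by omega)]
          congr 1
          congr 1
          omega
        rw [h1, h2]
        have hF1ne : F 1 ≠ .inl () := FneInl 1 one_pos (by omega)
        have h3 : PNS a n t (PNrho a n t (F 1)) = PNsrc a n t (F 1) :=
          (PNsrc_rho a n t _ hF1ne).symm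
        have h4 := CGF 0
        rw [hF0] at h4
        rw [h3, ← h4]
        refine Prod.ext (Fin.ext ?_) rfl
        show ((i % N) + (1 : Fin t).val) % t = (0 : Fin t).val
        rw [Fin.val_one', Fin.val_zero]
        by_cases h1t : t = 1
        · subst h1t; omega
        · rw [Nat.mod_eq_of_lt (show 1 < t by omega), hB, Nat.mod_self]
      · have hge : t ≤ i % N := by omega
        by_cases hD : i % N + 1 = N
        · have h1 : G i = PNrho a n t (F (L.length - 1)) := by
            simp only [hG]
            rw [dif_neg (by omega)]
            congr 2
            omega
          have h2 : G (i+1) = (⟨0, ht⟩, fun _ => 0) := by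
            simp only [hG]
            have hm : (i+1) % N = 0 := by rw [hs, hD, Nat.mod_self]
            simp only [hm]
            exact dif_pos ht
          have hFne : F (L.length - 1) ≠ .inl () := FneInl _ (by omega) (by omega)
          have h4 := CGF (L.length - 1)
          rw [show L.length - 1 + 1 = L.length from by omega, hFlen] at h4
          rw [h1, h2, ← PNtgt_rho a n t _ hFne, h4]
          refine Prod.ext (Fin.ext ?_) rfl
          show (0 : Fin t).val = (⟨0, ht⟩ : Fin t).val
          simp
        · have h1 : G i = PNrho a n t (F (i % N - t + 1)) := by
            simp only [hG]
            rw [dif_neg (by omega)]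
          have h2 : G (i+1) = PNrho a n t (F (i % N - t + 1 + 1)) := by
            simp only [hG]
            have hm : (i+1) % N = i % N + 1 := by rw [hs, Nat.mod_eq_of_lt (by omega)]
            simp only [hm]
            rw [dif_neg (by omega)]
            congr 2
            omega
          set q := i % N - t + 1 with hq
          have hq1 : 0 < q := by omega
          have hq2 : q + 1 < L.length := by omega
          have hqne : F q ≠ .inl () := FneInl q hq1 (by omega)
          have hq1ne : F (q+1) ≠ .inl () := FneInl (q+1) (by omega) hq2
          rw [h1, h2, ← PNtgt_rho a n t _ hqne, ← PNsrc_rho a n t _ hq1ne]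
          exact CGF q
  have Ginj : ∀ i i', i < N → i' < N → G i = G i' → i = i' := by
    intro i i' hi hi' heq
    simp only [hG] at heq
    simp only [Nat.mod_eq_of_lt hi, Nat.mod_eq_of_lt hi'] at heq
    by_cases h1 : i < t
    · by_cases h2 : i' < t
      · rw [dif_pos h1, dif_pos h2] at heq
        have := congrArg (fun p => p.1.val) heq
        simpa using this
      · rw [dif_pos h1, dif_neg h2] at heq
        have h3 := congrArg Prod.snd heq
        exact absurd h3.symm (PNrho_snd_ne a n t _ (FneInl _ (by omega) (by omega)))
    · by_cases h2 : i' < t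
      · rw [dif_neg h1, dif_pos h2] at heq
        have h3 := congrArg Prod.snd heq
        exact absurd h3 (PNrho_snd_ne a n t _ (FneInl _ (by omega) (by omega)))
      · rw [dif_neg h1, dif_neg h2] at heq
        have h3 := PNrho_inj a n t _ _ (FneInl _ (by omega) (by omega))
          (FneInl _ (by omega) (by omega)) heq
        have := Finj _ _ (by omega) (by omega) h3
        omega
  have Gsurj : ∀ p : Fin t × (Fin n → Fin a), ∃ i, i < N ∧ G i = p := by
    intro p
    by_cases hp : p.2 = fun _ => 0
    · refine ⟨p.1.val, by have := p.1.isLt; omega, ?_⟩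
      simp only [hG]
      have hm : p.1.val % N = p.1.val := Nat.mod_eq_of_lt (by have := p.1.isLt; omega)
      simp only [hm]
      rw [dif_pos p.1.isLt]
      exact Prod.ext (Fin.ext rfl) hp.symm
    · obtain ⟨q, hq, hFq⟩ := Fsurj (.inr ⟨p, hp⟩)
      have hq0 : q ≠ 0 := by
        intro h
        rw [h, hF0] at hFq
        simp at hFq
      refine ⟨q + t - 1, by omega, ?_⟩
      simp only [hG]
      have hm : (q + t - 1) % N = q + t - 1 := Nat.mod_eq_of_lt (by omega)
      simp only [hm]
      rw [dif_neg (by omega)]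
      rw [show q + t - 1 - t + 1 = q from by omega, hFq]
      rfl
  have G4 : ∀ i, (G i).1 = ⟨i % t, Nat.mod_lt _ ht⟩ := by
    intro i
    induction i with
    | zero =>
      simp only [hG]
      simp only [Nat.zero_mod]
      simp [ht]
    | succ i ih =>
      have h2 := congrArg Prod.fst (G2 i)
      have h3 : (G (i+1)).1 = (G i).1 + 1 := h2.symm
      rw [h3, ih]
      refine Fin.ext ?_
      rw [Fin.val_add, Fin.val_one']
      show (i % t + 1 % t) % t = (i+1) % t
      exact (Nat.add_mod i 1 t).symm
  have G5 : ∀ m, ∀ hm : m < n, ∀ i : ℕ, (G (i + m)).2 ⟨0, hn⟩ = (G i).2 ⟨m, hm⟩ := by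
    intro m
    induction m with
    | zero => intro hm i; rw [Nat.add_zero]
    | succ m ih =>
      intro hm i
      rw [show i + (m+1) = (i+1) + m from by omega, ih (by omega) (i+1)]
      have h2 := congrArg Prod.snd (G2 i)
      have h3 := congrFun h2 (⟨m, by omega⟩ : Fin (n-1))
      exact h3.symm
  refine ⟨fun i => (G i).2 ⟨0, hn⟩, ⟨?_, ?_⟩, ?_⟩
  · intro i
    exact congrArg (fun p => p.2 ⟨0, hn⟩) (G1 i)
  · intro j w
    obtain ⟨i0, hi0, hGi0⟩ := Gsurj (j, w)
    refine ⟨⟨i0, hi0⟩, ⟨?_, ?_⟩, ?_⟩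
    · have h5 := G4 i0
      rw [hGi0] at h5
      exact (congrArg Fin.val h5).symm
    · intro m
      show (G (i0 + m.val)).2 ⟨0, hn⟩ = w m
      rw [G5 m.val m.isLt i0, hGi0]
    · rintro i' ⟨hmod, hwin⟩
      have hGi' : G i'.val = (j, w) := by
        refine Prod.ext ?_ ?_
        · rw [G4 i'.val]
          exact Fin.ext hmod
        · funext m
          have h6 := G5 m.val m.isLt i'.val
          exact h6.symm.trans (hwin m)
      exact Fin.ext (Ginj i'.val i0 i'.isLt hi0 (hGi'.trans hGi0.symm))
  · intro i hit
    show (G i).2 ⟨0, hn⟩ = ⟨0, by omega⟩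
    simp only [hG]
    have hm : i % N = i := Nat.mod_eq_of_lt (by omega)
    simp only [hm]
    rw [dif_pos hit]
    exact Fin.ext (by simp)

/-- For all positive integers `a`, `n`, `t` there exists an `(a, n, t)`-perfect
necklace whose first `t` characters are all zero. -/
theorem exists_perfectNecklace_starting_with_zeros (a n t : ℕ)
    (ha : 0 < a) (hn : 0 < n) (ht : 0 < t) :
    ∃ v : ℕ → Fin a, IsPerfectNecklace a n t v ∧ ∀ i < t, v i = ⟨0, ha⟩ := by
  rcases Nat.lt_or_ge 1 a with ha2 | ha1
  · exact PN_main a n t ha2 hn ht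
  · have ha1' : a = 1 := by omega
    subst ha1'
    refine ⟨fun _ => ⟨0, ha⟩, ⟨fun i => rfl, ?_⟩, fun i _ => rfl⟩
    intro j w
    have hN : t * 1 ^ n = t := by simp
    refine ⟨⟨j.val, by rw [hN]; exact j.isLt⟩, ⟨?_, ?_⟩, ?_⟩
    · exact Nat.mod_eq_of_lt j.isLt
    · intro m
      exact Subsingleton.elim _ _
    · rintro i' ⟨hmod, -⟩
      apply Fin.ext
      show i'.val = j.val
      have hlt : i'.val < t := by have := i'.isLt; simp [hN] at this; exact this
      rw [← Nat.mod_eq_of_lt hlt, hmod]
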